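/- Let α : F → R_n(G) be the group homomorphism determined by α(f_i) = (g_i, t_i) for i = 1,…,m. Then the kernel of α is exactly R'·R^n, where R' = [R,R] is the commutator subgroup of R and R^n is the subgroup generated by all n-th powers of elements of R (with R^0 = {1}). In particular, α induces a faithful representation of F/(R'R^n) as a subgroup of R_n(G). -/

import Mathlib

/-- The group `R_n(G)` of pairs `(g,t)` with `g ∈ G` and `t` in the free left
`ℤ_n[G]`-module with basis indexed by `ι`, with multiplication
`(g,t)(h,s) = (gh, g·s+t)` (the semidirect product `T_n ⋊ G`).
Here `ℤ_n = ZMod n`, so `ℤ_0 = ℤ`. -/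
@[ext]
structure MagnusGroup (n : ℕ) (G : Type*) [Group G] (ι : Type*) where
  fst : G
  snd : ι → MonoidAlgebra (ZMod n) G

namespace MagnusGroup

variable {n : ℕ} {G : Type*} [Group G] {ι : Type*}

noncomputable instance : Mul (MagnusGroup n G ι) :=
  ⟨fun a b => ⟨a.fst * b.fst, fun i => MonoidAlgebra.of (ZMod n) G a.fst * b.snd i + a.snd i⟩⟩

noncomputable instance : One (MagnusGroup n G ι) := ⟨⟨1, 0⟩⟩

noncomputable instance : Inv (MagnusGroup n G ι) :=
  ⟨fun a => ⟨a.fst⁻¹, fun i => -(MonoidAlgebra.of (ZMod n) G a.fst⁻¹ * a.snd i)⟩⟩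

@[simp] lemma mul_fst (a b : MagnusGroup n G ι) : (a * b).fst = a.fst * b.fst := rfl
@[simp] lemma mul_snd (a b : MagnusGroup n G ι) (i : ι) :
    (a * b).snd i = MonoidAlgebra.of (ZMod n) G a.fst * b.snd i + a.snd i := rfl
@[simp] lemma one_fst : (1 : MagnusGroup n G ι).fst = 1 := rfl
@[simp] lemma one_snd (i : ι) : (1 : MagnusGroup n G ι).snd i = 0 := rfl
@[simp] lemma inv_fst (a : MagnusGroup n G ι) : (a⁻¹).fst = a.fst⁻¹ := rfl
@[simp] lemma inv_snd (a : MagnusGroup n G ι) (i : ι) :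
    (a⁻¹).snd i = -(MonoidAlgebra.of (ZMod n) G a.fst⁻¹ * a.snd i) := rfl

noncomputable instance : Group (MagnusGroup n G ι) where
  mul_assoc a b c :=
    MagnusGroup.ext (mul_assoc _ _ _)
      (funext fun i => by simp only [mul_fst, mul_snd, map_mul, mul_add, mul_assoc, add_assoc])
  one_mul a :=
    MagnusGroup.ext (one_mul _)
      (funext fun i => by simp only [mul_fst, mul_snd, one_fst, one_snd, map_one, one_mul,
        add_zero, zero_add])
  mul_one a :=
    MagnusGroup.ext (mul_one _)
      (funext fun i => by simp only [mul_fst, mul_snd, one_fst, one_snd, mul_zero, zero_add])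
  inv_mul_cancel a :=
    MagnusGroup.ext (inv_mul_cancel _)
      (funext fun i => by simp only [mul_fst, mul_snd, inv_fst, inv_snd, one_snd,
        add_neg_cancel, neg_add_cancel])

end MagnusGroup

/-- The subgroup generated by all `n`-th powers of elements of `H`
(for `n = 0` this is the trivial subgroup, matching `R⁰ = 1`). -/
def Subgroup.nthPowers {G : Type*} [Group G] (H : Subgroup G) (n : ℕ) : Subgroup G :=
  Subgroup.closure {x | ∃ h ∈ H, h ^ n = x}

/-- The Magnus–Romanovskii homomorphism `α : F → R_n(G)`, `G = F/R`, sending the `i`-th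
free generator `f_i` to `(g_i, t_i)`. -/
noncomputable def magnusHom (m n : ℕ) (R : Subgroup (FreeGroup (Fin m))) [R.Normal] :
    FreeGroup (Fin m) →* MagnusGroup n (FreeGroup (Fin m) ⧸ R) (Fin m) :=
  FreeGroup.lift fun i =>
    (⟨(QuotientGroup.mk (FreeGroup.of i) : FreeGroup (Fin m) ⧸ R), Pi.single i 1⟩ :
      MagnusGroup n (FreeGroup (Fin m) ⧸ R) (Fin m))

set_option linter.unusedSectionVars false
/-! ### Auxiliary machinery for the proof -/

namespace MagnusKer

open Subgroup QuotientGroup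
open scoped commutatorElement

/-- The subgroup of `n`-th powers of a normal subgroup is normal. -/
instance nthPowers_normal {G : Type*} [Group G] (H : Subgroup G) [hN : H.Normal] (n : ℕ) :
    (H.nthPowers n).Normal := by
  constructor
  intro x hx g
  have hmap : (H.nthPowers n).map (MulAut.conj g).toMonoidHom ≤ H.nthPowers n := by
    rw [Subgroup.nthPowers, MonoidHom.map_closure]
    refine (Subgroup.closure_le _).2 ?_
    rintro _ ⟨_, ⟨h, hh, rfl⟩, rfl⟩
    refine Subgroup.subset_closure ⟨g * h * g⁻¹, hN.conj_mem h hh g, ?_⟩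
    simp [conj_pow]
  simpa using hmap (Subgroup.mem_map_of_mem _ hx)

/-- Projection onto the first coordinate as a group homomorphism. -/
def fstHom (n : ℕ) (G : Type*) [Group G] (ι : Type*) : MagnusGroup n G ι →* G where
  toFun := MagnusGroup.fst
  map_one' := rfl
  map_mul' _ _ := rfl

variable (m n : ℕ) (R : Subgroup (FreeGroup (Fin m))) [R.Normal]

local notation "F" => FreeGroup (Fin m)

lemma magnusHom_of (i : Fin m) :
    magnusHom m n R (FreeGroup.of i)
      = (⟨QuotientGroup.mk (FreeGroup.of i), Pi.single i 1⟩ :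
          MagnusGroup n (F ⧸ R) (Fin m)) := by
  unfold magnusHom
  exact FreeGroup.lift_apply_of

lemma magnusHom_of_fst (i : Fin m) :
    (magnusHom m n R (FreeGroup.of i)).fst = QuotientGroup.mk (FreeGroup.of i) := by
  rw [magnusHom_of]

lemma magnusHom_of_snd (i : Fin m) :
    (magnusHom m n R (FreeGroup.of i)).snd = Pi.single i 1 := by
  rw [magnusHom_of]

lemma magnusHom_fst (w : F) :
    (magnusHom m n R w).fst = QuotientGroup.mk w := by
  have h : (fstHom n (F ⧸ R) (Fin m)).comp (magnusHom m n R) = QuotientGroup.mk' R :=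
    FreeGroup.ext_hom _ _ fun i => magnusHom_of_fst m n R i
  exact DFunLike.congr_fun h w

/-- `R' Rⁿ` as a subgroup of the free group. -/
abbrev NN : Subgroup F := ⁅R, R⁆ ⊔ R.nthPowers n

lemma NN_normal : (NN m n R).Normal := inferInstance

/-- The quotient `R / (R' Rⁿ)`. -/
abbrev QQmul := R ⧸ (NN m n R).subgroupOf R

instance : CommGroup (QQmul m n R) :=
  { (inferInstance : Group (QQmul m n R)) with
    mul_comm := by
      intro a b
      refine QuotientGroup.induction_on a fun r => QuotientGroup.induction_on b fun s => ?_
      rw [← QuotientGroup.mk_mul, ← QuotientGroup.mk_mul, QuotientGroup.eq]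
      rw [Subgroup.mem_subgroupOf]
      have h1 : ⁅((s : F))⁻¹, ((r : F))⁻¹⁆ ∈ NN m n R :=
        Subgroup.mem_sup_left (Subgroup.commutator_mem_commutator (R.inv_mem s.2) (R.inv_mem r.2))
      have h2 : ((((r * s)⁻¹ * (s * r) : R) : F)) = ⁅((s : F))⁻¹, ((r : F))⁻¹⁆ := by
        push_cast
        simp only [commutatorElement_def, inv_inv]
        group
      rw [h2]
      exact h1 }

lemma QQmul_pow_n (q : QQmul m n R) : q ^ n = 1 := by
  refine QuotientGroup.induction_on q fun r => ?_
  rw [← QuotientGroup.mk_pow, QuotientGroup.eq_one_iff]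
  rw [Subgroup.mem_subgroupOf]
  have h1 : ((r : F)) ^ n ∈ R.nthPowers n := Subgroup.subset_closure ⟨r, r.2, rfl⟩
  have h2 : (((r ^ n : R) : F)) = ((r : F)) ^ n := by push_cast; rfl
  rw [h2]
  exact Subgroup.mem_sup_right h1

/-- The quotient `R / (R' Rⁿ)`, written additively. -/
abbrev QQ := Additive (QQmul m n R)

noncomputable instance : Module (ZMod n) (QQ m n R) :=
  AddCommGroup.zmodModule (fun x => by
    show n • Additive.ofMul (Additive.toMul x) = 0
    rw [← ofMul_pow, QQmul_pow_n, ofMul_one])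

/-- The class of an element of `R` in `R/(R'Rⁿ)`, additively. -/
def qcl (w : F) (hw : w ∈ R) : QQ m n R :=
  Additive.ofMul (QuotientGroup.mk (⟨w, hw⟩ : R) : QQmul m n R)

lemma qcl_congr {w w' : F} (h : w = w') {hw : w ∈ R} {hw' : w' ∈ R} :
    qcl m n R w hw = qcl m n R w' hw' := by subst h; rfl

lemma qcl_mul (u v : F) (hu : u ∈ R) (hv : v ∈ R) :
    qcl m n R (u * v) (mul_mem hu hv) = qcl m n R u hu + qcl m n R v hv := rfl

lemma qcl_inv (u : F) (hu : u ∈ R) :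
    qcl m n R u⁻¹ (inv_mem hu) = - qcl m n R u hu := rfl

lemma qcl_one (h : (1 : F) ∈ R) : qcl m n R 1 h = 0 := rfl

lemma qcl_eq_zero {w : F} {hw : w ∈ R} :
    qcl m n R w hw = 0 ↔ w ∈ NN m n R := by
  rw [qcl, ofMul_eq_zero, QuotientGroup.eq_one_iff, Subgroup.mem_subgroupOf]

lemma conj_mem_R (g : F ⧸ R) (w : F) :
    g.out * w * ((g * QuotientGroup.mk w : F ⧸ R)).out⁻¹ ∈ R := by
  have h : (QuotientGroup.mk (g.out * w * ((g * QuotientGroup.mk w : F ⧸ R)).out⁻¹) : F ⧸ R)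
      = 1 := by
    rw [QuotientGroup.mk_mul, QuotientGroup.mk_mul, QuotientGroup.mk_inv,
      QuotientGroup.out_eq', QuotientGroup.out_eq', mul_inv_cancel]
  exact (QuotientGroup.eq_one_iff _).1 h

/-- The retraction `T_n → R/(R'Rⁿ)` sending `g·tᵢ` to the class of `σ(g) fᵢ σ(g gᵢ)⁻¹`. -/
noncomputable def PP (t : Fin m → MonoidAlgebra (ZMod n) (F ⧸ R)) : QQ m n R :=
  ∑ i : Fin m, Finsupp.sum (t i).coeff fun g c =>
    c • qcl m n R (g.out * FreeGroup.of i
        * ((g * QuotientGroup.mk (FreeGroup.of i) : F ⧸ R)).out⁻¹)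
      (conj_mem_R m R g (FreeGroup.of i))

lemma PP_zero : PP m n R 0 = 0 := by
  unfold PP
  refine Finset.sum_eq_zero fun i _ => ?_
  exact Finsupp.sum_zero_index

lemma PP_add (t t' : Fin m → MonoidAlgebra (ZMod n) (F ⧸ R)) :
    PP m n R (t + t') = PP m n R t + PP m n R t' := by
  unfold PP
  rw [← Finset.sum_add_distrib]
  refine Finset.sum_congr rfl fun i _ => ?_
  exact Finsupp.sum_add_index' (fun g => zero_smul _ _) (fun g b c => add_smul b c _)

lemma PP_neg (t : Fin m → MonoidAlgebra (ZMod n) (F ⧸ R)) :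
    PP m n R (-t) = - PP m n R t := by
  have h : PP m n R t + PP m n R (-t) = 0 := by
    rw [← PP_add, add_neg_cancel, PP_zero]
  exact (neg_eq_of_add_eq_zero_right h).symm

lemma PP_single (g : F ⧸ R) (i : Fin m) :
    PP m n R (fun j => MonoidAlgebra.of (ZMod n) (F ⧸ R) g * (Pi.single i 1 : Fin m → MonoidAlgebra (ZMod n) (F ⧸ R)) j)
      = qcl m n R (g.out * FreeGroup.of i
          * ((g * QuotientGroup.mk (FreeGroup.of i) : F ⧸ R)).out⁻¹)
        (conj_mem_R m R g (FreeGroup.of i)) := by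
  unfold PP
  rw [Finset.sum_eq_single i]
  · simp only [Pi.single_eq_same, mul_one, MonoidAlgebra.of_apply]
    refine (Finsupp.sum_single_index ?_).trans (one_smul _ _)
    exact zero_smul _ _
  · intro j _ hji
    simp only [Pi.single_eq_of_ne hji, mul_zero]
    exact Finsupp.sum_zero_index
  · intro h; exact absurd (Finset.mem_univ i) h

lemma pure_eq_of {i : Fin m} : (pure i : F) = FreeGroup.of i := rfl

lemma key (w : F) (g : F ⧸ R) :
    PP m n R (fun i => MonoidAlgebra.of (ZMod n) (F ⧸ R) g * (magnusHom m n R w).snd i)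
      = qcl m n R (g.out * w * ((g * QuotientGroup.mk w : F ⧸ R)).out⁻¹)
        (conj_mem_R m R g w) := by
  induction w using FreeGroup.induction_on generalizing g with
  | C1 =>
    have h0 : (fun i => MonoidAlgebra.of (ZMod n) (F ⧸ R) g * (magnusHom m n R 1).snd i)
        = 0 := by
      funext i
      rw [map_one, MagnusGroup.one_snd, mul_zero]
      rfl
    rw [h0, PP_zero]
    refine ((qcl_congr m n R (w' := 1) ?_).trans (qcl_one m n R (one_mem R))).symm
    have h1 : ((QuotientGroup.mk (1 : F) : F ⧸ R)) = 1 := by simp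
    rw [h1, mul_one, mul_one, mul_inv_cancel]
  | of i =>
    simp only [pure_eq_of, magnusHom_of_snd]
    exact PP_single m n R g i
  | inv_of i _ =>
    have hL : (fun j => MonoidAlgebra.of (ZMod n) (F ⧸ R) g
          * (magnusHom m n R (FreeGroup.of i)⁻¹).snd j)
        = -(fun j => MonoidAlgebra.of (ZMod n) (F ⧸ R)
              (g * (QuotientGroup.mk (FreeGroup.of i) : F ⧸ R)⁻¹)
            * (Pi.single i 1 : Fin m → MonoidAlgebra (ZMod n) (F ⧸ R)) j) := by
      funext j
      rw [map_inv]
      rw [MagnusGroup.inv_snd, magnusHom_of_fst, magnusHom_of_snd]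
      rw [mul_neg, ← mul_assoc, ← map_mul]
      rfl
    rw [hL, PP_neg, PP_single, ← qcl_inv]
    refine qcl_congr m n R ?_
    have h1 : (g * (QuotientGroup.mk (FreeGroup.of i) : F ⧸ R)⁻¹)
        * QuotientGroup.mk (FreeGroup.of i) = g := inv_mul_cancel_right g _
    have h2 : (g * (QuotientGroup.mk ((FreeGroup.of i)⁻¹) : F ⧸ R))
        = g * (QuotientGroup.mk (FreeGroup.of i) : F ⧸ R)⁻¹ := by
      rw [QuotientGroup.mk_inv]
    rw [h1, h2]
    group
  | mul u v ihu ihv =>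
    have hsplit : (fun i => MonoidAlgebra.of (ZMod n) (F ⧸ R) g
          * (magnusHom m n R (u * v)).snd i)
        = (fun i => MonoidAlgebra.of (ZMod n) (F ⧸ R) (g * QuotientGroup.mk u)
            * (magnusHom m n R v).snd i)
          + fun i => MonoidAlgebra.of (ZMod n) (F ⧸ R) g * (magnusHom m n R u).snd i := by
      funext i
      rw [map_mul, Pi.add_apply, MagnusGroup.mul_snd, magnusHom_fst]
      rw [mul_add, ← mul_assoc, ← map_mul]
    rw [hsplit, PP_add, ihv, ihu, add_comm, ← qcl_mul]
    refine qcl_congr m n R ?_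
    have h1 : (g * (QuotientGroup.mk (u * v) : F ⧸ R))
        = g * QuotientGroup.mk u * QuotientGroup.mk v := by
      rw [QuotientGroup.mk_mul, mul_assoc]
    rw [h1]
    group


lemma commute_aux {n : ℕ} {G : Type*} [Group G] {ι : Type*} {a b : MagnusGroup n G ι}
    (ha : a.fst = 1) (hb : b.fst = 1) : Commute a b := by
  show a * b = b * a
  refine MagnusGroup.ext ?_ ?_
  · show a.fst * b.fst = b.fst * a.fst
    rw [ha, hb]
  · funext i
    show MonoidAlgebra.of _ _ a.fst * b.snd i + a.snd i
      = MonoidAlgebra.of _ _ b.fst * a.snd i + b.snd i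
    rw [ha, hb, map_one, one_mul, one_mul, add_comm]

lemma pow_aux {n : ℕ} {G : Type*} [Group G] {ι : Type*} {a : MagnusGroup n G ι}
    (ha : a.fst = 1) (k : ℕ) : a ^ k = ⟨1, k • a.snd⟩ := by
  induction k with
  | zero =>
    refine MagnusGroup.ext rfl ?_
    rw [zero_smul]
    rfl
  | succ k ih =>
    rw [pow_succ, ih]
    refine MagnusGroup.ext ?_ ?_
    · show 1 * a.fst = 1
      rw [ha, mul_one]
    · funext i
      show MonoidAlgebra.of _ _ (1 : G) * a.snd i + (k • a.snd) i = ((k + 1) • a.snd) i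
      rw [map_one, one_mul, Pi.smul_apply, Pi.smul_apply, succ_nsmul, add_comm]


end MagnusKer

/-- Romanovskii: the kernel of `α : F → R_n(G)` is exactly `R'·Rⁿ`; in particular `α`
induces a faithful representation of `F/(R'Rⁿ)` in `R_n(G)`. -/
theorem magnusHom_ker (m n : ℕ) (R : Subgroup (FreeGroup (Fin m))) [R.Normal] :
    (magnusHom m n R).ker = ⁅R, R⁆ ⊔ R.nthPowers n := by
  apply le_antisymm
  · intro w hw
    rw [MonoidHom.mem_ker] at hw
    have hR : w ∈ R := by
      have h1 := MagnusKer.magnusHom_fst m n R w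
      rw [hw] at h1
      exact (QuotientGroup.eq_one_iff w).1 h1.symm
    have hkey := MagnusKer.key m n R w 1
    have h0 : (fun i => MonoidAlgebra.of (ZMod n) (FreeGroup (Fin m) ⧸ R) 1
        * (magnusHom m n R w).snd i) = 0 := by
      funext i
      rw [hw, MagnusGroup.one_snd, mul_zero]
      rfl
    rw [h0, MagnusKer.PP_zero] at hkey
    have hmk : (QuotientGroup.mk w : FreeGroup (Fin m) ⧸ R) = 1 :=
      (QuotientGroup.eq_one_iff w).2 hR
    set z := (1 : FreeGroup (Fin m) ⧸ R).out with hz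
    have he : (1 : FreeGroup (Fin m) ⧸ R).out * w
        * ((1 * QuotientGroup.mk w : FreeGroup (Fin m) ⧸ R)).out⁻¹ = z * w * z⁻¹ := by
      rw [hmk, mul_one]
    rw [MagnusKer.qcl_congr m n R he
      (hw' := by rw [← he]; exact MagnusKer.conj_mem_R m R 1 w)] at hkey
    have hmem : z * w * z⁻¹ ∈ MagnusKer.NN m n R :=
      (MagnusKer.qcl_eq_zero m n R).1 hkey.symm
    have hconj := (MagnusKer.NN_normal m n R).conj_mem _ hmem z⁻¹
    have hww : z⁻¹ * (z * w * z⁻¹) * z⁻¹⁻¹ = w := by group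
    rwa [hww] at hconj
  · refine sup_le ?_ ?_
    · rw [Subgroup.commutator_le]
      intro r hr s hs
      rw [MonoidHom.mem_ker, map_commutatorElement]
      refine commutatorElement_eq_one_iff_commute.2 (MagnusKer.commute_aux ?_ ?_)
      · rw [MagnusKer.magnusHom_fst]
        exact (QuotientGroup.eq_one_iff r).2 hr
      · rw [MagnusKer.magnusHom_fst]
        exact (QuotientGroup.eq_one_iff s).2 hs
    · rw [Subgroup.nthPowers, Subgroup.closure_le]
      rintro x ⟨h, hh, rfl⟩
      show h ^ n ∈ (magnusHom m n R).ker
      rw [MonoidHom.mem_ker, map_pow]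
      rw [MagnusKer.pow_aux (by
        rw [MagnusKer.magnusHom_fst]
        exact (QuotientGroup.eq_one_iff h).2 hh) n]
      refine MagnusGroup.ext rfl ?_
      funext i
      simp only [Pi.smul_apply, MagnusGroup.one_snd]
      rw [← Nat.cast_smul_eq_nsmul (ZMod n), ZMod.natCast_self, zero_smul]
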